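/- Let q ≥ 2 be a power of 2. There exist functions φ : {1,…,q} → {1,…,2q−1} and r : {1,…,q} → 𝒫({1,…,2q−1}) such that: (1) for every c ∈ {1,…,q}, |r(c)| = 1 + log₂ q; (2) φ(c) ∈ r(c) for every c; and (3) for every pair of distinct colors c₁, c₂ ∈ {1,…,q}, there exists x ∈ r(c₁) ∩ r(c₂) with min{φ(c₁), φ(c₂)} < x < max{φ(c₁), φ(c₂)}. -/

import Mathlib

private lemma pow_mul_odd_inj : ∀ h₁ h₂ a b : ℕ,
    2 ^ h₁ * (2 * a + 1) = 2 ^ h₂ * (2 * b + 1) → h₁ = h₂ := by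
  intro h₁
  induction h₁ with
  | zero =>
    intro h₂ a b heq
    cases h₂ with
    | zero => rfl
    | succ s =>
      exfalso
      rw [pow_succ, mul_comm (2^s) 2, mul_assoc] at heq
      omega
  | succ s ih =>
    intro h₂ a b heq
    cases h₂ with
    | zero =>
      exfalso
      rw [pow_succ, mul_comm (2^s) 2, mul_assoc] at heq
      omega
    | succ t =>
      rw [pow_succ, pow_succ, mul_comm (2^s) 2, mul_comm (2^t) 2,
        mul_assoc, mul_assoc] at heq
      have := Nat.eq_of_mul_eq_mul_left (by norm_num) heq
      exact congrArg Nat.succ (ih t a b this)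

private lemma aux_key (m c₁ c₂ : ℕ) (h1 : 1 ≤ c₁) (h2 : c₂ ≤ 2 ^ m) (hlt : c₁ < c₂) :
    ∃ x, (∃ h ≤ m, x = 2 ^ h * (2 * ((c₁ - 1) / 2 ^ h) + 1)) ∧
      (∃ h ≤ m, x = 2 ^ h * (2 * ((c₂ - 1) / 2 ^ h) + 1)) ∧
      2 * c₁ - 1 < x ∧ x < 2 * c₂ - 1 := by
  have P : ∃ h, (c₁ - 1) / 2 ^ h = (c₂ - 1) / 2 ^ h := by
    refine ⟨m, ?_⟩
    rw [Nat.div_eq_of_lt (by omega), Nat.div_eq_of_lt (by omega)]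
  classical
  set h := Nat.find P with hh
  have hspec : (c₁ - 1) / 2 ^ h = (c₂ - 1) / 2 ^ h := Nat.find_spec P
  have hle : h ≤ m := Nat.find_le (by
    rw [Nat.div_eq_of_lt (by omega), Nat.div_eq_of_lt (by omega)])
  have hpos : 1 ≤ h := by
    rcases Nat.eq_zero_or_pos h with h0 | h0
    · exfalso
      have := hspec
      rw [h0] at this
      simp at this
      omega
    · exact h0
  have hmin : (c₁ - 1) / 2 ^ (h - 1) ≠ (c₂ - 1) / 2 ^ (h - 1) := Nat.find_min P (by omega)
  clear_value h
  obtain ⟨h', rfl⟩ : ∃ h', h = h' + 1 := ⟨h - 1, by omega⟩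
  simp only [Nat.add_sub_cancel] at hmin
  set k := (c₁ - 1) / 2 ^ (h' + 1) with hk
  -- quotients at level h'
  set q₁ := (c₁ - 1) / 2 ^ h' with hq₁
  set q₂ := (c₂ - 1) / 2 ^ h' with hq₂
  have hd1 : q₁ / 2 = k := by
    rw [hq₁, hk, Nat.div_div_eq_div_mul, ← pow_succ]
  have hd2 : q₂ / 2 = k := by
    rw [hq₂, hk, Nat.div_div_eq_div_mul, ← pow_succ, ← hspec]
  have hq12 : q₁ ≤ q₂ := Nat.div_le_div_right (by omega)
  have hq1k : q₁ = 2 * k := by omega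
  have hq2k : q₂ = 2 * k + 1 := by omega
  have hpow' : 0 < 2 ^ h' := Nat.pow_pos (by norm_num)
  have hc1 : c₁ - 1 < (2 * k + 1) * 2 ^ h' := by
    have : (c₁ - 1) / 2 ^ h' < 2 * k + 1 := by omega
    exact (Nat.div_lt_iff_lt_mul hpow').mp this
  have hc2 : (2 * k + 1) * 2 ^ h' ≤ c₂ - 1 := by
    have : 2 * k + 1 ≤ (c₂ - 1) / 2 ^ h' := by omega
    exact (Nat.le_div_iff_mul_le hpow').mp this
  refine ⟨2 ^ (h' + 1) * (2 * k + 1), ⟨h' + 1, hle, rfl⟩,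
    ⟨h' + 1, hle, by rw [← hspec]⟩, ?_, ?_⟩
  · have : 2 ^ (h' + 1) * (2 * k + 1) = 2 * ((2 * k + 1) * 2 ^ h') := by ring
    omega
  · have : 2 ^ (h' + 1) * (2 * k + 1) = 2 * ((2 * k + 1) * 2 ^ h') := by ring
    omega

/-- Tree-coding lemma of Barenboim and Maimon: for `q ≥ 2` a power of 2,
there are maps `φ : {1,…,q} → {1,…,2q−1}` and `r : {1,…,q} → 𝒫({1,…,2q−1})`
with `|r c| = 1 + log₂ q`, `φ c ∈ r c`, and for distinct colors an element of
`r c₁ ∩ r c₂` strictly between `φ c₁` and `φ c₂`. -/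
theorem stmt0 (q : ℕ) (hq : 2 ≤ q) (hpow : ∃ m, q = 2 ^ m) :
    ∃ (φ : ℕ → ℕ) (r : ℕ → Finset ℕ),
      (∀ c ∈ Finset.Icc 1 q,
        φ c ∈ Finset.Icc 1 (2 * q - 1) ∧
        r c ⊆ Finset.Icc 1 (2 * q - 1) ∧
        (r c).card = 1 + Nat.log 2 q ∧
        φ c ∈ r c) ∧
      (∀ c₁ ∈ Finset.Icc 1 q, ∀ c₂ ∈ Finset.Icc 1 q, c₁ ≠ c₂ →
        ∃ x ∈ r c₁ ∩ r c₂,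
          min (φ c₁) (φ c₂) < x ∧ x < max (φ c₁) (φ c₂)) := by
  obtain ⟨m, rfl⟩ := hpow
  refine ⟨fun c => 2 * c - 1,
    fun c => (Finset.range (m + 1)).image (fun h => 2 ^ h * (2 * ((c - 1) / 2 ^ h) + 1)),
    ?_, ?_⟩
  · intro c hc
    rw [Finset.mem_Icc] at hc
    obtain ⟨hc1, hc2⟩ := hc
    have hmem : ∀ h ≤ m, 2 ^ h * (2 * ((c - 1) / 2 ^ h) + 1) ∈ Finset.Icc 1 (2 * 2 ^ m - 1) := by
      intro h hhm
      rw [Finset.mem_Icc]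
      have hpow' : 0 < 2 ^ h := Nat.pow_pos (by norm_num)
      constructor
      · exact Nat.le_mul_of_pos_left _ (by omega) |>.trans' (by omega)
      · set k := (c - 1) / 2 ^ h with hk
        have h1 : k * 2 ^ h ≤ c - 1 := by
          rw [hk]; exact Nat.div_mul_le_self _ _
        have hdvd : 2 ^ h ∣ 2 ^ m := pow_dvd_pow 2 hhm
        have h2 : (k + 1) * 2 ^ h ≤ 2 ^ m := by
          have hlt : k * 2 ^ h < 2 ^ m := by omega
          obtain ⟨d, hd⟩ := hdvd
          rw [hd] at hlt ⊢
          have : k < d := by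
            by_contra hkd
            push_neg at hkd
            have := Nat.mul_le_mul_right (2 ^ h) hkd
            rw [mul_comm (2^h) d] at hlt
            omega
          calc (k + 1) * 2 ^ h ≤ d * 2 ^ h := Nat.mul_le_mul_right _ (by omega)
          _ = 2 ^ h * d := by ring
        have : 2 ^ h * (2 * k + 1) = 2 * ((k + 1) * 2 ^ h) - 2 ^ h := by
          have : 2 * ((k + 1) * 2 ^ h) = 2 ^ h * (2 * k + 1) + 2 ^ h := by ring
          omega
        omega
    refine ⟨?_, ?_, ?_, ?_⟩
    · have := hmem 0 (Nat.zero_le m)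
      rw [Finset.mem_Icc] at this ⊢
      simp only [pow_zero, Nat.div_one, one_mul] at this
      show 1 ≤ 2 * c - 1 ∧ 2 * c - 1 ≤ 2 * 2 ^ m - 1
      omega
    · intro x hx
      rw [Finset.mem_image] at hx
      obtain ⟨h, hh, rfl⟩ := hx
      rw [Finset.mem_range] at hh
      exact hmem h (by omega)
    · rw [Finset.card_image_of_injOn, Finset.card_range, Nat.log_pow (by norm_num), Nat.add_comm]
      intro h₁ _ h₂ _ heq
      exact pow_mul_odd_inj h₁ h₂ _ _ heq
    · rw [Finset.mem_image]
      exact ⟨0, Finset.mem_range.mpr (by omega), by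
        simp [Nat.div_one]; omega⟩
  · intro c₁ hc₁ c₂ hc₂ hne
    rw [Finset.mem_Icc] at hc₁ hc₂
    rcases lt_or_gt_of_ne hne with hlt | hlt
    · obtain ⟨x, ⟨h₁, hh₁, hx₁⟩, ⟨h₂, hh₂, hx₂⟩, hl, hr⟩ :=
        aux_key m c₁ c₂ hc₁.1 hc₂.2 hlt
      refine ⟨x, Finset.mem_inter.mpr ⟨?_, ?_⟩, ?_, ?_⟩
      · exact Finset.mem_image.mpr ⟨h₁, Finset.mem_range.mpr (by omega), hx₁.symm⟩
      · exact Finset.mem_image.mpr ⟨h₂, Finset.mem_range.mpr (by omega), hx₂.symm⟩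
      · show min (2 * c₁ - 1) (2 * c₂ - 1) < x
        rw [min_eq_left (by omega)]; exact hl
      · show x < max (2 * c₁ - 1) (2 * c₂ - 1)
        rw [max_eq_right (by omega)]; exact hr
    · obtain ⟨x, ⟨h₁, hh₁, hx₁⟩, ⟨h₂, hh₂, hx₂⟩, hl, hr⟩ :=
        aux_key m c₂ c₁ hc₂.1 hc₁.2 hlt
      refine ⟨x, Finset.mem_inter.mpr ⟨?_, ?_⟩, ?_, ?_⟩
      · exact Finset.mem_image.mpr ⟨h₂, Finset.mem_range.mpr (by omega), hx₂.symm⟩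
      · exact Finset.mem_image.mpr ⟨h₁, Finset.mem_range.mpr (by omega), hx₁.symm⟩
      · show min (2 * c₁ - 1) (2 * c₂ - 1) < x
        rw [min_eq_right (by omega)]; exact hl
      · show x < max (2 * c₁ - 1) (2 * c₂ - 1)
        rw [max_eq_left (by omega)]; exact hr
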